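/- Let n ∈ ℕ with n ≥ 3. Then for every integer m with |m| ≤ 2^{⌊4(n-3)/5⌋} there exists a bit string M of length n with π(M) = m; that is, every such integer is representable as an n-bit posit. -/

import Mathlib

/-- Integer value of a bit string read MSB → LSB. -/
def bitsToNat (L : List Bool) : ℕ :=
  L.foldl (fun a b => 2 * a + (if b then 1 else 0)) 0

/-- The posit decoding function `π`. A bit string (MSB → LSB, padded on the right with
zero "ghost bits" as needed) consists of a sign bit `S`, a run `R` of `k ≥ 1` identical
bits, a terminating bit (the negation of the run bits), two exponent bits and the
fraction bits. The all-zeros string encodes `0` (`some 0`), `10…0` encodes NaR (`none`),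
and every other string encodes `((1 - 3S) + f) · 2^e` with regime `r = k - 1` (run of
ones) or `r = -k` (run of zeros), exponent value `ê ∈ {0,1,2,3}`, fraction `f ∈ [0,1)`
and exponent `e = (-1)^S (4r + ê + S)`. -/
def positVal : List Bool → Option ℚ
  | [] => some 0
  | S :: rest =>
    if rest.all (fun b => b == false) then
      if S then none else some 0
    else
      let b0 : Bool := rest.getD 0 false
      let k : ℕ := (rest.takeWhile (fun b => b == b0)).length
      let r : ℤ := if b0 then (k : ℤ) - 1 else -(k : ℤ)
      let ehat : ℤ := 2 * (if rest.getD (k + 1) false then 1 else 0) +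
        (if rest.getD (k + 2) false then 1 else 0)
      let F : List Bool := rest.drop (k + 3)
      let f : ℚ := (bitsToNat F : ℚ) / 2 ^ F.length
      let s : ℤ := if S then 1 else 0
      let e : ℤ := (if S then -1 else 1) * (4 * r + ehat + s)
      some (((1 - 3 * (s : ℚ)) + f) * 2 ^ e)

lemma bitsToNat_aux (L : List Bool) (a : ℕ) :
    L.foldl (fun a b => 2 * a + (if b then 1 else 0)) a = a * 2 ^ L.length + bitsToNat L := by
  induction L generalizing a with
  | nil => simp [bitsToNat]
  | cons b L ih =>
    simp only [List.foldl_cons, List.length_cons, bitsToNat]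
    rw [ih, ih (2 * 0 + _)]
    ring

lemma bitsToNat_cons (b : Bool) (L : List Bool) :
    bitsToNat (b :: L) = (if b then 1 else 0) * 2 ^ L.length + bitsToNat L := by
  simp only [bitsToNat, List.foldl_cons]
  rw [bitsToNat_aux]
  simp [bitsToNat]

def natToBits : ℕ → ℕ → List Bool
  | 0, _ => []
  | p + 1, v => (decide (2 ^ p ≤ v)) :: natToBits p (v % 2 ^ p)

lemma natToBits_length (p v : ℕ) : (natToBits p v).length = p := by
  induction p generalizing v with
  | zero => rfl
  | succ p ih => simp [natToBits, ih]

lemma bitsToNat_natToBits (p v : ℕ) (h : v < 2 ^ p) : bitsToNat (natToBits p v) = v := by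
  induction p generalizing v with
  | zero => interval_cases v; rfl
  | succ p ih =>
    have h2 : 0 < 2 ^ p := Nat.pow_pos (by norm_num)
    rw [natToBits, bitsToNat_cons, natToBits_length, ih _ (Nat.mod_lt _ h2)]
    have hpp : 2 ^ (p+1) = 2 * 2 ^ p := by ring
    by_cases hle : 2 ^ p ≤ v
    · have h3 : v % 2 ^ p = v - 2 ^ p := by
        rw [Nat.mod_eq_sub_mod hle, Nat.mod_eq_of_lt]; omega
      rw [h3]
      simp only [hle]
      norm_num
      omega
    · rw [Nat.mod_eq_of_lt (by omega)]
      simp [hle]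

lemma tw_rep (k : ℕ) (b0 : Bool) (L : List Bool) :
    (List.replicate k b0 ++ (!b0) :: L).takeWhile (fun b => b == b0) = List.replicate k b0 := by
  induction k with
  | zero => simp [List.takeWhile_cons]
  | succ k ih => simp [List.replicate_succ, List.takeWhile_cons, ih]

lemma positVal_encode (S b0 e1 e0 : Bool) (k : ℕ) (hk : 1 ≤ k) (F : List Bool) :
    positVal (S :: (List.replicate k b0 ++ (!b0) :: e1 :: e0 :: F)) =
    some (((1 - 3 * (if S then (1:ℚ) else 0)) + (bitsToNat F : ℚ) / 2 ^ F.length) *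
      2 ^ ((if S then (-1:ℤ) else 1) * (4 * (if b0 then (k:ℤ) - 1 else -(k:ℤ)) +
        (2 * (if e1 then (1:ℤ) else 0) + (if e0 then 1 else 0)) + (if S then 1 else 0)))) := by
  have hne : ((List.replicate k b0 ++ (!b0) :: e1 :: e0 :: F).all (fun b => b == false)) = false := by
    cases b0 <;> simp [List.all_eq_true] <;> omega
  have hget0 : (List.replicate k b0 ++ (!b0) :: e1 :: e0 :: F).getD 0 false = b0 := by
    obtain ⟨k', rfl⟩ : ∃ k', k = k' + 1 := ⟨k - 1, by omega⟩
    simp [List.replicate_succ]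
  have hlen : (List.replicate k b0).length = k := List.length_replicate ..
  have hgetd : ∀ (i : ℕ), (List.replicate k b0 ++ (!b0) :: e1 :: e0 :: F).getD (k + i) false
      = ((!b0) :: e1 :: e0 :: F).getD i false := by
    intro i
    rw [List.getD_append_right _ _ _ _ (by omega : (List.replicate k b0).length ≤ k + i)]
    congr 1; rw [hlen]; omega
  have hdrop : (List.replicate k b0 ++ (!b0) :: e1 :: e0 :: F).drop (k + 3)
      = F := by
    rw [show k + 3 = (List.replicate k b0).length + 3 by rw [hlen], List.drop_append]
    simp
  rw [positVal]
  rw [hne]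
  simp only [Bool.false_eq_true, if_false]
  simp only [hget0, tw_rep, hlen, hgetd, hdrop]
  norm_num

/-- encoding of a positive value `2^e + w·2^e/2^p`. -/
lemma encode_pos (e p w : ℕ) (hw : w < 2 ^ p) :
    positVal (false :: (List.replicate (e/4+1) true ++
        false :: decide (2 ≤ e % 4) :: decide (e % 2 = 1) :: natToBits p w)) =
      some ((2^e : ℚ) + (w : ℚ) * 2^e / 2^p) := by
  have h := positVal_encode false true (decide (2 ≤ e % 4)) (decide (e % 2 = 1))
    (e/4+1) (by omega) (natToBits p w)
  simp only [Bool.not_true] at h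
  rw [h]
  congr 1
  have he : (1 : ℤ) * (4 * (((e/4+1 : ℕ) : ℤ) - 1) +
      (2 * (if decide (2 ≤ e % 4) then (1:ℤ) else 0) + (if decide (e % 2 = 1) then (1:ℤ) else 0)) + 0)
      = (e : ℤ) := by
    have h4 : e % 4 < 4 := Nat.mod_lt _ (by norm_num)
    have h24 : e % 2 = e % 4 % 2 := (Nat.mod_mod_of_dvd e (by norm_num)).symm
    by_cases h1 : 2 ≤ e % 4 <;> by_cases h2 : e % 2 = 1 <;>
      simp [h1, h2] <;> push_cast <;> omega
  simp only [if_false, if_true, Bool.false_eq_true]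
  rw [he]
  rw [bitsToNat_natToBits p w hw, natToBits_length]
  rw [zpow_natCast]
  push_cast
  ring

/-- encoding of a negative value `-2^(e+1) + w·2^e/2^p`. -/
lemma encode_neg (e p w : ℕ) (hw : w < 2 ^ p) :
    positVal (true :: (List.replicate (e/4+1) false ++
        true :: decide (e % 4 ≤ 1) :: decide (e % 2 = 0) :: natToBits p w)) =
      some (-(2^(e+1) : ℚ) + (w : ℚ) * 2^e / 2^p) := by
  have h := positVal_encode true false (decide (e % 4 ≤ 1)) (decide (e % 2 = 0))
    (e/4+1) (by omega) (natToBits p w)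
  simp only [Bool.not_false] at h
  rw [h]
  congr 1
  have he : (-1 : ℤ) * (4 * (-((e/4+1 : ℕ) : ℤ)) +
      (2 * (if decide (e % 4 ≤ 1) then (1:ℤ) else 0) + (if decide (e % 2 = 0) then (1:ℤ) else 0)) + 1)
      = (e : ℤ) := by
    have h4 : e % 4 < 4 := Nat.mod_lt _ (by norm_num)
    have h24 : e % 2 = e % 4 % 2 := (Nat.mod_mod_of_dvd e (by norm_num)).symm
    by_cases h1 : e % 4 ≤ 1 <;> by_cases h2 : e % 2 = 0 <;>
      simp [h1, h2] <;> push_cast <;> omega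
  simp only [if_true, Bool.false_eq_true, if_false]
  rw [he]
  rw [bitsToNat_natToBits p w hw, natToBits_length]
  rw [zpow_natCast]
  push_cast
  ring

/-- encoding of `-1` for `n ≥ 5`. -/
lemma encode_negone (p : ℕ) :
    positVal (true :: (List.replicate 1 true ++
        false :: false :: false :: natToBits p 0)) = some (-1 : ℚ) := by
  have h := positVal_encode true true false false 1 (by omega) (natToBits p 0)
  simp only [Bool.not_true] at h
  rw [h]
  congr 1
  rw [bitsToNat_natToBits p 0 (by positivity), natToBits_length]
  norm_num

lemma positVal_zero (n : ℕ) (hn : 1 ≤ n) :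
    positVal (List.replicate n false) = some 0 := by
  obtain ⟨n', rfl⟩ : ∃ n', n = n' + 1 := ⟨n - 1, by omega⟩
  rw [List.replicate_succ, positVal]
  simp [List.all_eq_true, List.mem_replicate]

/-- **Consecutive posit integers (representability).**
For `n ≥ 3`, every integer `m` with `|m| ≤ 2^⌊4(n-3)/5⌋` is representable as an
`n`-bit posit. -/
theorem posit_consecutive_integers (n : ℕ) (hn : 3 ≤ n) (m : ℤ)
    (hm : |m| ≤ 2 ^ (4 * (n - 3) / 5)) :
    ∃ M : List Bool, M.length = n ∧ positVal M = some (m : ℚ) := by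
  set t := 4 * (n - 3) / 5 with ht
  have ht1 : 5 * t ≤ 4 * (n - 3) := by omega
  have ht2 : 4 * (n - 3) < 5 * t + 5 := by omega
  have h2t : ((2:ℤ) ^ t) = ((2 ^ t : ℕ) : ℤ) := by push_cast; ring
  -- small n
  by_cases hn5 : n < 5
  · have htz : t = 0 := by omega
    rw [htz] at hm
    have hm1 : m = -1 ∨ m = 0 ∨ m = 1 := by
      rw [abs_le] at hm; omega
    interval_cases n
    · rcases hm1 with rfl | rfl | rfl
      · exact ⟨[true, true, false], rfl, by norm_num [positVal, bitsToNat, List.takeWhile_cons]⟩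
      · exact ⟨[false, false, false], rfl, by norm_num [positVal, bitsToNat, List.takeWhile_cons]⟩
      · exact ⟨[false, true, false], rfl, by norm_num [positVal, bitsToNat, List.takeWhile_cons]⟩
    · rcases hm1 with rfl | rfl | rfl
      · exact ⟨[true, true, false, false], rfl, by norm_num [positVal, bitsToNat, List.takeWhile_cons]⟩
      · exact ⟨[false, false, false, false], rfl, by norm_num [positVal, bitsToNat, List.takeWhile_cons]⟩
      · exact ⟨[false, true, false, false], rfl, by norm_num [positVal, bitsToNat, List.takeWhile_cons]⟩
  push_neg at hn5
  have htpos : 1 ≤ t := by omega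
  rcases lt_trichotomy m 0 with hneg | rfl | hpos
  · -- negative case
    set m' := (-m).toNat with hm'
    have hmm : (m : ℚ) = -(m' : ℚ) := by
      have : ((m' : ℤ)) = -m := Int.toNat_of_nonneg (by omega)
      have := congrArg (fun z : ℤ => (z : ℚ)) this
      push_cast at this ⊢
      linarith
    have hm'1 : 1 ≤ m' := by omega
    have hm't : m' ≤ 2 ^ t := by
      have h1 : (-m) ≤ 2 ^ t := by rw [abs_le] at hm; omega
      rw [h2t] at h1
      omega
    by_cases hone : m' = 1
    · refine ⟨true :: (List.replicate 1 true ++ false :: false :: false :: natToBits (n-5) 0),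
        ?_, ?_⟩
      · simp [natToBits_length]; omega
      · rw [encode_negone, hmm, hone]; norm_num
    · -- m' ≥ 2
      set e := Nat.log2 (m' - 1) with he
      have hle : 2 ^ e ≤ m' - 1 := Nat.log2_self_le (by omega)
      have hlt : m' - 1 < 2 ^ (e + 1) := Nat.lt_log2_self
      have hee : 2 ^ (e+1) = 2 * 2 ^ e := by ring
      have het : e < t := by
        by_contra hc
        have : 2 ^ t ≤ 2 ^ e := Nat.pow_le_pow_right (by norm_num) (by omega)
        omega
      have hpe : e + e / 4 + 5 ≤ n := by omega
      set p := n - e / 4 - 5 with hp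
      have hpege : e ≤ p := by omega
      set v := 2 ^ (e+1) - m' with hv
      have hvlt : v < 2 ^ e := by omega
      set w := v * 2 ^ (p - e) with hw
      have hwlt : w < 2 ^ p := by
        calc w < 2 ^ e * 2 ^ (p - e) :=
              Nat.mul_lt_mul_of_lt_of_le hvlt le_rfl (by positivity)
          _ = 2 ^ p := by rw [← pow_add]; congr 1; omega
      refine ⟨true :: (List.replicate (e/4+1) false ++
          true :: decide (e % 4 ≤ 1) :: decide (e % 2 = 0) :: natToBits p w), ?_, ?_⟩
      · simp [natToBits_length]; omega
      · rw [encode_neg e p w hwlt, hmm]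
        congr 1
        have hkey : ((w : ℚ) * 2 ^ e) / 2 ^ p = (v : ℚ) := by
          rw [div_eq_iff (by positivity), hw]
          push_cast
          rw [mul_assoc, ← pow_add]
          congr 2
          omega
        rw [hkey]
        have hvq : (v : ℚ) = 2 ^ (e+1) - (m' : ℚ) := by
          rw [hv]
          push_cast [Nat.cast_sub (by omega : m' ≤ 2 ^ (e+1))]
          ring
        rw [hvq]; ring
  · -- zero
    exact ⟨List.replicate n false, List.length_replicate .., by
      rw [positVal_zero n (by omega)]; norm_num⟩
  · -- positive
    set m' := m.toNat with hm'
    have hmm : (m : ℚ) = (m' : ℚ) := by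
      have : ((m' : ℤ)) = m := Int.toNat_of_nonneg (by omega)
      exact_mod_cast (congrArg (fun z : ℤ => (z : ℚ)) this).symm
    have hm'1 : 1 ≤ m' := by omega
    have hm't : m' ≤ 2 ^ t := by
      have h1 : m ≤ 2 ^ t := by rw [abs_le] at hm; omega
      rw [h2t] at h1
      omega
    set e := Nat.log2 m' with he
    have hle : 2 ^ e ≤ m' := Nat.log2_self_le (by omega)
    have hlt : m' < 2 ^ (e + 1) := Nat.lt_log2_self
    have hee : 2 ^ (e+1) = 2 * 2 ^ e := by ring
    have het : e ≤ t := by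
      by_contra hc
      have : 2 ^ (t+1) ≤ 2 ^ e := Nat.pow_le_pow_right (by norm_num) (by omega)
      have h2 : 2 ^ t < 2 ^ (t+1) := by
        have : 2 ^ (t+1) = 2 * 2 ^ t := by ring
        have : 0 < 2 ^ t := Nat.pow_pos (show 0 < 2 by norm_num)
        omega
      omega
    by_cases hsq : m' = 2 ^ e
    · -- exact power of two
      have hkn : e / 4 + 5 ≤ n := by omega
      set p := n - e / 4 - 5 with hp
      refine ⟨false :: (List.replicate (e/4+1) true ++
          false :: decide (2 ≤ e % 4) :: decide (e % 2 = 1) :: natToBits p 0), ?_, ?_⟩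
      · simp [natToBits_length]; omega
      · rw [encode_pos e p 0 (by positivity), hmm, hsq]
        push_cast; norm_num
    · -- general
      have hgt : 2 ^ e < m' := by omega
      have het' : e < t := by
        by_contra hc
        have h3 : 2 ^ t ≤ 2 ^ e := Nat.pow_le_pow_right (by norm_num) (by omega)
        omega
      have hpe : e + e / 4 + 5 ≤ n := by omega
      set p := n - e / 4 - 5 with hp
      have hpege : e ≤ p := by omega
      set v := m' - 2 ^ e with hv
      have hvlt : v < 2 ^ e := by omega
      set w := v * 2 ^ (p - e) with hw
      have hwlt : w < 2 ^ p := by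
        calc w < 2 ^ e * 2 ^ (p - e) :=
              Nat.mul_lt_mul_of_lt_of_le hvlt le_rfl (by positivity)
          _ = 2 ^ p := by rw [← pow_add]; congr 1; omega
      refine ⟨false :: (List.replicate (e/4+1) true ++
          false :: decide (2 ≤ e % 4) :: decide (e % 2 = 1) :: natToBits p w), ?_, ?_⟩
      · simp [natToBits_length]; omega
      · rw [encode_pos e p w hwlt, hmm]
        congr 1
        have hkey : ((w : ℚ) * 2 ^ e) / 2 ^ p = (v : ℚ) := by
          rw [div_eq_iff (by positivity), hw]
          push_cast
          rw [mul_assoc, ← pow_add]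
          congr 2
          omega
        rw [hkey]
        have hvq : (v : ℚ) = (m' : ℚ) - 2 ^ e := by
          rw [hv]
          push_cast [Nat.cast_sub hle]
          ring
        rw [hvq]; ring
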